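/- Let G be a nontrivial Polish group such that for every infinite S ⊆ ℕ the set {g ∈ G : ∃s ∈ S, g^s = 1} is dense in G. Then every topological similarity class of G is meagre. In particular, every conjugacy class of G is meagre. -/

import Mathlib

open Filter Topology

/-- Two elements `f, g` of a topological group are topologically similar if for every
increasing sequence `(s_k)` of natural numbers, `f ^ (s_k) → 1` iff `g ^ (s_k) → 1`. -/
def TopSimilar {G : Type*} [Group G] [TopologicalSpace G] (f g : G) : Prop :=
  ∀ u : ℕ → ℕ, StrictMono u →
    (Tendsto (fun k => f ^ u k) atTop (𝓝 1) ↔ Tendsto (fun k => g ^ u k) atTop (𝓝 1))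

/-- The set of elements admitting a strictly increasing sequence in `S` along which powers
tend to `1` is residual. -/
lemma aux_residual_subseq {G : Type*} [Group G] [TopologicalSpace G] [IsTopologicalGroup G]
    [PolishSpace G]
    (hdense : ∀ S : Set ℕ, S.Infinite → Dense {g : G | ∃ s ∈ S, g ^ s = 1})
    (S : Set ℕ) (hS : S.Infinite) :
    {g : G | ∃ u : ℕ → ℕ, StrictMono u ∧ (∀ k, u k ∈ S) ∧
      Tendsto (fun k => g ^ u k) atTop (𝓝 1)} ∈ residual G := by
  obtain ⟨V, hV⟩ := (𝓝 (1 : G)).exists_antitone_basis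
  set A : ℕ → ℕ → Set G := fun m n => {g | ∃ s ∈ S, n ≤ s ∧ g ^ s ∈ interior (V m)} with hA
  have hopen : ∀ m n, IsOpen (A m n) := by
    intro m n
    have heq : A m n = ⋃ s ∈ S ∩ Set.Ici n, (fun g : G => g ^ s) ⁻¹' interior (V m) := by
      ext g
      simp only [hA, Set.mem_setOf_eq, Set.mem_iUnion, Set.mem_inter_iff, Set.mem_Ici,
        Set.mem_preimage, exists_prop]
      tauto
    rw [heq]
    exact isOpen_biUnion fun s _ => isOpen_interior.preimage (continuous_pow s)
  have hdns : ∀ m n, Dense (A m n) := by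
    intro m n
    have hinf : (S ∩ Set.Ici n).Infinite := by
      have : S \ Set.Iio n = S ∩ Set.Ici n := by
        ext x; simp [Set.diff_eq, Set.mem_Ici, Set.mem_Iio, not_lt]
      rw [← this]
      exact hS.diff (Set.finite_Iio n)
    refine Dense.mono ?_ (hdense _ hinf)
    intro g hg
    obtain ⟨s, hs, hgs⟩ := hg
    refine ⟨s, hs.1, hs.2, ?_⟩
    rw [hgs]
    exact mem_interior_iff_mem_nhds.2 (hV.mem m)
  have hres : (⋂ m, ⋂ n, A m n) ∈ residual G :=
    countable_iInter_mem.2 fun m => countable_iInter_mem.2 fun n =>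
      residual_of_dense_open (hopen m n) (hdns m n)
  refine Filter.mem_of_superset hres ?_
  intro g hg
  simp only [Set.mem_iInter] at hg
  have key : ∀ m p : ℕ, ∃ s, s ∈ S ∧ p < s ∧ g ^ s ∈ interior (V m) := by
    intro m p
    obtain ⟨s, hs, hps, hmem⟩ := hg m (p + 1)
    exact ⟨s, hs, hps, hmem⟩
  choose F hF1 hF2 hF3 using key
  set u : ℕ → ℕ := fun k => Nat.rec (F 0 0) (fun k ih => F (k + 1) ih) k with hu
  have hu0 : ∀ k, u (k + 1) = F (k + 1) (u k) := fun k => rfl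
  have hmono : StrictMono u := strictMono_nat_of_lt_succ fun k => by
    rw [hu0]; exact hF2 _ _
  have humem : ∀ k, u k ∈ S := by
    intro k
    cases k with
    | zero => exact hF1 0 0
    | succ k => rw [hu0]; exact hF1 _ _
  have hint : ∀ k, g ^ u k ∈ interior (V k) := by
    intro k
    cases k with
    | zero => exact hF3 0 0
    | succ k => rw [hu0]; exact hF3 _ _
  exact ⟨u, hmono, humem, hV.tendsto fun k => interior_subset (hint k)⟩

/-- Let `G` be a nontrivial Polish group such that for every infinite `S ⊆ ℕ` the set
`{g : ∃ s ∈ S, g ^ s = 1}` is dense in `G`. Then every topological similarity class of `G`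
is meagre; in particular every conjugacy class of `G` is meagre. -/
theorem stmt16 {G : Type*} [Group G] [TopologicalSpace G] [IsTopologicalGroup G] [PolishSpace G]
    [Nontrivial G]
    (hdense : ∀ S : Set ℕ, S.Infinite → Dense {g : G | ∃ s ∈ S, g ^ s = 1}) :
    (∀ f : G, IsMeagre {g : G | TopSimilar f g}) ∧
    (∀ f : G, IsMeagre {g : G | IsConj f g}) := by
  letI := TopologicalSpace.upgradeIsCompletelyMetrizable G
  have heq1 : ∀ x : G, Tendsto (fun n : ℕ => x ^ n) atTop (𝓝 1) → x = 1 := by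
    intro x hx
    have h2 : Tendsto (fun n : ℕ => x ^ (n + 1)) atTop (𝓝 1) :=
      hx.comp (tendsto_add_atTop_nat 1)
    have h4 : Tendsto (fun n : ℕ => x ^ (n + 1)) atTop (𝓝 x) := by
      have h3 : Tendsto (fun n : ℕ => x * x ^ n) atTop (𝓝 (x * 1)) :=
        tendsto_const_nhds.mul hx
      simpa [pow_succ'] using h3
    exact tendsto_nhds_unique h4 h2
  have h1 : ∀ f : G, IsMeagre {g : G | TopSimilar f g} := by
    intro f
    by_contra hne
    set M := {g : G | TopSimilar f g} with hM
    -- Step 1: for every infinite S, there is a strictly increasing sequence in S along which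
    -- powers of f tend to 1.
    have hstep : ∀ S : Set ℕ, S.Infinite → ∃ u : ℕ → ℕ, StrictMono u ∧ (∀ k, u k ∈ S) ∧
        Tendsto (fun k => f ^ u k) atTop (𝓝 1) := by
      intro S hS
      have hres := aux_residual_subseq hdense S hS
      set C := {g : G | ∃ u : ℕ → ℕ, StrictMono u ∧ (∀ k, u k ∈ S) ∧
        Tendsto (fun k => g ^ u k) atTop (𝓝 1)} with hC
      have hnonempty : (M ∩ C).Nonempty := by
        by_contra hcon
        rw [Set.not_nonempty_iff_eq_empty] at hcon
        apply hne
        have hmeag : IsMeagre Cᶜ := by rw [IsMeagre, compl_compl]; exact hres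
        refine hmeag.mono ?_
        intro g hgM hgC
        exact absurd hcon (Set.Nonempty.ne_empty ⟨g, hgM, hgC⟩)
      obtain ⟨g, hgM, u, hu, huS, hgu⟩ := hnonempty
      exact ⟨u, hu, huS, (hgM u hu).mpr hgu⟩
    -- Step 2: f ^ n → 1.
    have hf1 : Tendsto (fun n : ℕ => f ^ n) atTop (𝓝 1) := by
      by_contra hcon
      rw [not_tendsto_iff_exists_frequently_notMem] at hcon
      obtain ⟨U, hU, hfreq⟩ := hcon
      have hinf : {n : ℕ | f ^ n ∉ U}.Infinite :=
        Nat.frequently_atTop_iff_infinite.1 hfreq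
      obtain ⟨u, hu, huS, htend⟩ := hstep _ hinf
      have : ∀ᶠ k in atTop, f ^ u k ∈ U := htend hU
      obtain ⟨N, hN⟩ := eventually_atTop.1 this
      exact huS N (hN N le_rfl)
    -- Step 3: f = 1.
    have hfeq : f = 1 := heq1 f hf1
    subst hfeq
    -- Step 4: M ⊆ {1}.
    have hsub : M ⊆ {(1 : G)} := by
      intro g hg
      have hgid : Tendsto (fun k : ℕ => g ^ k) atTop (𝓝 1) := by
        refine (hg id strictMono_id).mp ?_
        simp only [one_pow]; exact (tendsto_const_nhds : Tendsto (fun _ : ℕ => (1 : G)) atTop (𝓝 1))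
      exact heq1 g hgid
    -- Step 5: {1} is meagre, contradiction.
    apply hne
    refine IsMeagre.mono hsub ?_
    rw [IsMeagre]
    refine residual_of_dense_open isClosed_singleton.isOpen_compl ?_
    rw [← interior_eq_empty_iff_dense_compl]
    by_contra hint
    have hop1 : IsOpen {(1 : G)} := by
      have hsub' : interior {(1 : G)} ⊆ {1} := interior_subset
      rcases Set.subset_singleton_iff_eq.1 hsub' with h | h
      · exact absurd h hint
      · rw [← h]; exact isOpen_interior
    obtain ⟨h, hh⟩ := exists_ne (1 : G)
    have hoph : IsOpen {h} := by
      have := (Homeomorph.mulLeft h).isOpenMap _ hop1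
      simpa using this
    have hS₁ : {n : ℕ | h ^ n ≠ 1}.Infinite := by
      by_contra hfin
      rw [Set.not_infinite] at hfin
      obtain ⟨N, hN⟩ := hfin.bddAbove
      have hev : ∀ᶠ n in atTop, h ^ n = 1 := by
        refine eventually_atTop.2 ⟨N + 1, fun n hn => ?_⟩
        by_contra hne'
        have := hN hne'
        omega
      have htend : Tendsto (fun n : ℕ => h ^ n) atTop (𝓝 1) :=
        Tendsto.congr' (hev.mono fun n hn => hn.symm) tendsto_const_nhds
      exact hh (heq1 h htend)
    obtain ⟨x, hxD, hxh⟩ := (hdense _ hS₁).exists_mem_open hoph ⟨h, rfl⟩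
    rw [Set.mem_singleton_iff] at hxh
    subst hxh
    obtain ⟨s, hs, hxs⟩ := hxD
    exact hs hxs
  refine ⟨h1, fun f => (h1 f).mono ?_⟩
  intro g hg
  rw [Set.mem_setOf_eq, isConj_iff] at hg
  obtain ⟨c, rfl⟩ := hg
  intro u hu
  have hconj : ∀ (c x : G), Tendsto (fun k => x ^ u k) atTop (𝓝 1) →
      Tendsto (fun k => (c * x * c⁻¹) ^ u k) atTop (𝓝 1) := by
    intro c x hx
    have hc : Continuous fun y : G => c * y * c⁻¹ := by continuity
    have := (hc.tendsto 1).comp hx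
    simpa [conj_pow, Function.comp_def] using this
  constructor
  · intro hf
    exact hconj c f hf
  · intro hg'
    have := hconj c⁻¹ (c * f * c⁻¹) hg'
    have heq : c⁻¹ * (c * f * c⁻¹) * c⁻¹⁻¹ = f := by group
    rwa [heq] at this
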